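/- Let R be a linearly ordered abelian group with the order topology, V ⊆ R^n an open subset, and suppose for each x ∈ V we have a strictly decreasing bijection θ_x : [a_x, b_x] → [c_x, d_x] with θ_x(a_x) = d_x and θ_x(b_x) = c_x. Assume a, b, c, d : V → R are continuous, and the map (x, y) ↦ θ_x(y) on {(x,y) : x ∈ V, y ∈ [a_x, b_x]} is continuous. Then the map γ : {(x, z) : x ∈ V, z ∈ [c_x, d_x]} → R defined by γ(x, z) = θ_x^{-1}(z) is continuous. -/

import Mathlib

open Set

private def thetaBar {R : Type*} [AddCommGroup R] [LinearOrder R] [IsOrderedAddMonoid R]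
    (a b : R) (θ : R → R) (y : R) : R :=
  θ (max a (min y b)) + ((a - min y a) + (b - max y b))

private theorem thetaBar_of_le {R : Type*} [AddCommGroup R] [LinearOrder R] [IsOrderedAddMonoid R]
    {a b : R} (hab : a ≤ b) (θ : R → R) {y : R} (hy : y ≤ a) :
    thetaBar a b θ y = θ a + (a - y) := by
  have h1 : min y b = y := min_eq_left (hy.trans hab)
  have h2 : min y a = y := min_eq_left hy
  have h3 : max y b = b := max_eq_right (hy.trans hab)
  simp [thetaBar, h1, h2, h3, max_eq_left hy]

private theorem thetaBar_of_mem {R : Type*} [AddCommGroup R] [LinearOrder R] [IsOrderedAddMonoid R]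
    {a b : R} (θ : R → R) {y : R} (h1 : a ≤ y) (h2 : y ≤ b) :
    thetaBar a b θ y = θ y := by
  simp [thetaBar, min_eq_left h2, max_eq_right h1, min_eq_right h1, max_eq_right h2]

private theorem thetaBar_of_ge {R : Type*} [AddCommGroup R] [LinearOrder R] [IsOrderedAddMonoid R]
    {a b : R} (hab : a ≤ b) (θ : R → R) {y : R} (hy : b ≤ y) :
    thetaBar a b θ y = θ b + (b - y) := by
  simp [thetaBar, min_eq_right hy, max_eq_right hab, min_eq_right (hab.trans hy),
    max_eq_left hy]

private theorem thetaBar_strictAnti {R : Type*} [AddCommGroup R] [LinearOrder R] [IsOrderedAddMonoid R]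
    {a b : R} (hab : a ≤ b) {θ : R → R} (hθ : StrictAntiOn θ (Icc a b)) :
    StrictAnti (thetaBar a b θ) := by
  have haI : a ∈ Icc a b := ⟨le_refl a, hab⟩
  have hbI : b ∈ Icc a b := ⟨hab, le_refl b⟩
  have hba : θ b ≤ θ a := hθ.antitoneOn haI hbI hab
  intro y₁ y₂ h
  rcases le_or_gt y₂ a with h2a | h2a
  · rw [thetaBar_of_le hab θ h2a, thetaBar_of_le hab θ (h.le.trans h2a)]
    exact add_lt_add_right (sub_lt_sub_left h a) _
  rcases le_or_gt y₁ a with h1a | h1a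
  · -- y₁ ≤ a < y₂ : show thetaBar y₂ < θ a ≤ thetaBar y₁
    have hub : thetaBar a b θ y₂ < θ a := by
      rcases le_or_gt y₂ b with h2b | h2b
      · rw [thetaBar_of_mem θ h2a.le h2b]
        exact hθ haI ⟨h2a.le, h2b⟩ h2a
      · rw [thetaBar_of_ge hab θ h2b.le]
        calc θ b + (b - y₂) < θ b + 0 := add_lt_add_right (sub_neg.2 h2b) _
          _ = θ b := add_zero _
          _ ≤ θ a := hba
    have hlb : θ a ≤ thetaBar a b θ y₁ := by
      rw [thetaBar_of_le hab θ h1a]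
      exact le_add_of_nonneg_right (sub_nonneg.2 h1a)
    exact hub.trans_le hlb
  rcases le_or_gt y₂ b with h2b | h2b
  · rw [thetaBar_of_mem θ h1a.le (h.le.trans h2b), thetaBar_of_mem θ h2a.le h2b]
    exact hθ ⟨h1a.le, (h.le.trans h2b)⟩ ⟨h2a.le, h2b⟩ h
  rcases le_or_gt y₁ b with h1b | h1b
  · rw [thetaBar_of_ge hab θ h2b.le, thetaBar_of_mem θ h1a.le h1b]
    have h1 : θ b ≤ θ y₁ := hθ.antitoneOn ⟨h1a.le, h1b⟩ hbI h1b
    calc θ b + (b - y₂) < θ b + 0 := add_lt_add_right (sub_neg.2 h2b) _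
      _ = θ b := add_zero _
      _ ≤ θ y₁ := h1
  · rw [thetaBar_of_ge hab θ h2b.le, thetaBar_of_ge hab θ h1b.le]
    exact add_lt_add_right (sub_lt_sub_left h b) _

theorem stmt_4 {R : Type*} [AddCommGroup R] [LinearOrder R] [IsOrderedAddMonoid R]
    [TopologicalSpace R] [OrderTopology R] {n : ℕ}
    (V : Set (Fin n → R)) (hV : IsOpen V)
    (a b c d : (Fin n → R) → R)
    (ha : ContinuousOn a V) (hb : ContinuousOn b V)
    (hc : ContinuousOn c V) (hd : ContinuousOn d V)
    (hab : ∀ x ∈ V, a x ≤ b x)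
    (θ γ : (Fin n → R) → R → R)
    (hbij : ∀ x ∈ V, Set.BijOn (θ x) (Set.Icc (a x) (b x)) (Set.Icc (c x) (d x)))
    (hanti : ∀ x ∈ V, StrictAntiOn (θ x) (Set.Icc (a x) (b x)))
    (hθa : ∀ x ∈ V, θ x (a x) = d x) (hθb : ∀ x ∈ V, θ x (b x) = c x)
    (hθcont : ContinuousOn (fun p : (Fin n → R) × R => θ p.1 p.2)
      {p : (Fin n → R) × R | p.1 ∈ V ∧ p.2 ∈ Set.Icc (a p.1) (b p.1)})
    (hγ : ∀ x ∈ V, ∀ z ∈ Set.Icc (c x) (d x),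
      γ x z ∈ Set.Icc (a x) (b x) ∧ θ x (γ x z) = z) :
    ContinuousOn (fun p : (Fin n → R) × R => γ p.1 p.2)
      {p : (Fin n → R) × R | p.1 ∈ V ∧ p.2 ∈ Set.Icc (c p.1) (d p.1)} := by
  rcases subsingleton_or_nontrivial R with hR | hR
  · have : (fun p : (Fin n → R) × R => γ p.1 p.2) = fun _ => (0:R) :=
      funext fun _ => Subsingleton.elim _ _
    rw [this]; exact continuousOn_const
  set S := {p : (Fin n → R) × R | p.1 ∈ V ∧ p.2 ∈ Set.Icc (c p.1) (d p.1)} with hS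
  set T : (Fin n → R) → R → R := fun x => thetaBar (a x) (b x) (θ x) with hTdef
  have hTanti : ∀ x ∈ V, StrictAnti (T x) := fun x hx =>
    thetaBar_strictAnti (hab x hx) (hanti x hx)
  have hTγ : ∀ x ∈ V, ∀ z ∈ Set.Icc (c x) (d x), T x (γ x z) = z := by
    intro x hx z hz
    obtain ⟨hmem, heq⟩ := hγ x hx z hz
    rw [hTdef]
    simp only
    rw [thetaBar_of_mem _ hmem.1 hmem.2, heq]
  set U := V ×ˢ (univ : Set R) with hU
  have hUopen : IsOpen U := hV.prod isOpen_univ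
  have hacont : ContinuousOn (fun p : (Fin n → R) × R => a p.1) U :=
    ha.comp continuous_fst.continuousOn (fun p hp => hp.1)
  have hbcont : ContinuousOn (fun p : (Fin n → R) × R => b p.1) U :=
    hb.comp continuous_fst.continuousOn (fun p hp => hp.1)
  have hclampcont : ContinuousOn
      (fun p : (Fin n → R) × R => max (a p.1) (min p.2 (b p.1))) U :=
    hacont.sup ((continuous_snd.continuousOn : ContinuousOn (fun p : (Fin n → R) × R => p.2) U).inf hbcont)
  have hclampmem : ∀ p ∈ U,
      max (a p.1) (min p.2 (b p.1)) ∈ Set.Icc (a p.1) (b p.1) := by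
    intro p hp
    exact ⟨le_max_left _ _, max_le (hab p.1 hp.1) (min_le_right _ _)⟩
  have hTcont : ContinuousOn (fun p : (Fin n → R) × R => T p.1 p.2) U := by
    have h1 : ContinuousOn
        (fun p : (Fin n → R) × R => θ p.1 (max (a p.1) (min p.2 (b p.1)))) U := by
      apply hθcont.comp
        ((continuous_fst.continuousOn : ContinuousOn (fun p : (Fin n → R) × R => p.1) U).prodMk hclampcont)
      intro p hp
      exact ⟨hp.1, hclampmem p hp⟩
    have h2 : ContinuousOn (fun p : (Fin n → R) × R =>
        (a p.1 - min p.2 (a p.1)) + (b p.1 - max p.2 (b p.1))) U :=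
      ((hacont.sub ((continuous_snd.continuousOn : ContinuousOn (fun p : (Fin n → R) × R => p.2) U).inf hacont)).add
        (hbcont.sub ((continuous_snd.continuousOn : ContinuousOn (fun p : (Fin n → R) × R => p.2) U).sup hbcont)))
    exact h1.add h2
  intro p₀ hp₀
  obtain ⟨hx₀, hz₀⟩ := hp₀
  have hy₀mem := (hγ p₀.1 hx₀ p₀.2 hz₀).1
  have hz₀' : T p₀.1 (γ p₀.1 p₀.2) = p₀.2 := hTγ p₀.1 hx₀ p₀.2 hz₀
  rw [ContinuousWithinAt, (nhds_basis_Ioo (γ p₀.1 p₀.2)).tendsto_right_iff]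
  rintro ⟨u, v⟩ ⟨hu, hv⟩
  simp only at hu hv
  have h1 : T p₀.1 v < p₀.2 := by rw [← hz₀']; exact hTanti p₀.1 hx₀ hv
  have h2 : p₀.2 < T p₀.1 u := by rw [← hz₀']; exact hTanti p₀.1 hx₀ hu
  set W := {p : (Fin n → R) × R | p.1 ∈ V ∧ T p.1 v < p.2 ∧ p.2 < T p.1 u} with hW
  have hWopen : IsOpen W := by
    have hfc : ContinuousOn (fun p : (Fin n → R) × R =>
        ((T p.1 v, p.2), (p.2, T p.1 u))) U := by
      have hv' : ContinuousOn (fun p : (Fin n → R) × R => T p.1 v) U := by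
        exact hTcont.comp
          ((continuous_fst.continuousOn : ContinuousOn (fun p : (Fin n → R) × R => p.1) U).prodMk continuousOn_const)
          (fun p hp => ⟨hp.1, mem_univ _⟩)
      have hu' : ContinuousOn (fun p : (Fin n → R) × R => T p.1 u) U := by
        exact hTcont.comp
          ((continuous_fst.continuousOn : ContinuousOn (fun p : (Fin n → R) × R => p.1) U).prodMk continuousOn_const)
          (fun p hp => ⟨hp.1, mem_univ _⟩)
      exact (hv'.prodMk continuous_snd.continuousOn).prodMk
        (continuous_snd.continuousOn.prodMk hu')
    have hO : IsOpen {q : (R × R) × (R × R) | q.1.1 < q.1.2 ∧ q.2.1 < q.2.2} :=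
      (isOpen_lt (continuous_fst.comp continuous_fst)
          (continuous_snd.comp continuous_fst)).inter
        (isOpen_lt (continuous_fst.comp continuous_snd)
          (continuous_snd.comp continuous_snd))
    have : W = U ∩ (fun p : (Fin n → R) × R =>
        ((T p.1 v, p.2), (p.2, T p.1 u))) ⁻¹' {q | q.1.1 < q.1.2 ∧ q.2.1 < q.2.2} := by
      ext p
      simp only [hW, hU, mem_setOf_eq, mem_inter_iff, mem_preimage, mem_prod, mem_univ,
        and_true]
    rw [this]
    exact hfc.isOpen_inter_preimage hUopen hO
  have hp₀W : p₀ ∈ W := ⟨hx₀, h1, h2⟩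
  filter_upwards [mem_nhdsWithin_of_mem_nhds (hWopen.mem_nhds hp₀W),
    self_mem_nhdsWithin] with p hpW hpS
  obtain ⟨hpV, hlt1, hlt2⟩ := hpW
  obtain ⟨_, hpz⟩ := hpS
  have hymem := (hγ p.1 hpV p.2 hpz).1
  have hTy : T p.1 (γ p.1 p.2) = p.2 := hTγ p.1 hpV p.2 hpz
  constructor
  · by_contra hcon
    push_neg at hcon
    have : T p.1 u ≤ T p.1 (γ p.1 p.2) := (hTanti p.1 hpV).antitone hcon
    rw [hTy] at this
    exact absurd hlt2 (not_lt.2 this)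
  · by_contra hcon
    push_neg at hcon
    have : T p.1 (γ p.1 p.2) ≤ T p.1 v := (hTanti p.1 hpV).antitone hcon
    rw [hTy] at this
    exact absurd hlt1 (not_lt.2 this)
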